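/- Let l : ℝ^p → ℝ be differentiable, and let U ⊆ {1,…,p} and k ≥ 1. Suppose l is m-strongly concave on Ω_{|U|+k} and M̃-smooth on Ω̃_{|U|+1} (with 0 < m ≤ M̃). Then the set function f(S) = l(β^{(S)}) − l(0) is (m/M̃)-weakly submodular at (U,k): for every L ⊆ U and every S ⊆ {1,…,p} disjoint from L with |S| ≤ k, Σ_{j∈S} [f(L∪{j}) − f(L)] ≥ (m/M̃) · (f(L∪S) − f(L)). -/

import Mathlib

open Finset

noncomputable section

/-- Number of nonzero coordinates (the "ℓ₀ norm") of a vector. -/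
def spar {p : ℕ} (v : Fin p → ℝ) : ℕ := (Finset.univ.filter fun i => v i ≠ 0).card

/-- Support of a vector, as a `Finset`. -/
def suppF {p : ℕ} (v : Fin p → ℝ) : Finset (Fin p) :=
  Finset.univ.filter fun i => v i ≠ 0

/-- `Ω_k`: pairs of `k`-sparse vectors differing in at most `k` coordinates. -/
def Omega {p : ℕ} (k : ℕ) : Set ((Fin p → ℝ) × (Fin p → ℝ)) :=
  {q | spar q.1 ≤ k ∧ spar q.2 ≤ k ∧ spar (q.1 - q.2) ≤ k}

/-- `Ω̃_k`: pairs of `k`-sparse vectors differing in at most one coordinate. -/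
def OmegaT {p : ℕ} (k : ℕ) : Set ((Fin p → ℝ) × (Fin p → ℝ)) :=
  {q | spar q.1 ≤ k ∧ spar q.2 ≤ k ∧ spar (q.1 - q.2) ≤ 1}

/-- `l` is `m`-strongly concave on `Ω`. -/
def RStrongConcaveOn {p : ℕ} (l : (Fin p → ℝ) → ℝ) (m : ℝ)
    (Ω : Set ((Fin p → ℝ) × (Fin p → ℝ))) : Prop :=
  ∀ x y : Fin p → ℝ, (x, y) ∈ Ω →
    l y - l x - fderiv ℝ l x (y - x) ≤ -(m / 2) * ∑ i, (y i - x i) ^ 2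

/-- `l` is `M`-smooth on `Ω`. -/
def RSmoothOn {p : ℕ} (l : (Fin p → ℝ) → ℝ) (M : ℝ)
    (Ω : Set ((Fin p → ℝ) × (Fin p → ℝ))) : Prop :=
  ∀ x y : Fin p → ℝ, (x, y) ∈ Ω →
    -(M / 2) * ∑ i, (y i - x i) ^ 2 ≤ l y - l x - fderiv ℝ l x (y - x)

lemma mem_suppF {p : ℕ} {v : Fin p → ℝ} {i : Fin p} : i ∈ suppF v ↔ v i ≠ 0 := by
  simp [suppF]

lemma spar_le_of_suppF_subset {p : ℕ} {v : Fin p → ℝ} {S : Finset (Fin p)}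
    (h : suppF v ⊆ S) : spar v ≤ S.card := Finset.card_le_card h

lemma suppF_sub_subset {p : ℕ} (x y : Fin p → ℝ) :
    suppF (x - y) ⊆ suppF x ∪ suppF y := by
  intro i hi
  rw [mem_suppF] at hi
  simp only [Finset.mem_union, mem_suppF]
  by_contra h
  push_neg at h
  simp [Pi.sub_apply, h.1, h.2] at hi

lemma fd_sum {p : ℕ} (φ : (Fin p → ℝ) →L[ℝ] ℝ) (v : Fin p → ℝ) :
    φ v = ∑ i, v i * φ (Pi.single i 1) := by
  conv_lhs => rw [← Finset.univ_sum_single v]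
  rw [map_sum]
  refine Finset.sum_congr rfl fun i _ => ?_
  have : Pi.single i (v i) = v i • (Pi.single i 1 : Fin p → ℝ) := by
    ext j
    by_cases h : j = i <;> simp [Pi.single_apply, h]
  rw [this, map_smul, smul_eq_mul]

lemma grad_eq_zero {p : ℕ} {l : (Fin p → ℝ) → ℝ} (hl : Differentiable ℝ l)
    {b : Fin p → ℝ} {L : Finset (Fin p)} (hb : suppF b ⊆ L)
    (hmax : ∀ v : Fin p → ℝ, suppF v ⊆ L → l v ≤ l b) {i : Fin p} (hi : i ∈ L) :
    fderiv ℝ l b (Pi.single i 1) = 0 := by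
  have hc : HasDerivAt (fun t : ℝ => b + t • (Pi.single i 1 : Fin p → ℝ))
      (Pi.single i 1) 0 := by
    simpa using ((hasDerivAt_id (0:ℝ)).smul_const (Pi.single i 1 : Fin p → ℝ)).const_add b
  have hφ : HasDerivAt (fun t : ℝ => l (b + t • (Pi.single i 1 : Fin p → ℝ)))
      (fderiv ℝ l b (Pi.single i 1)) 0 := by
    have h0 : b + (0:ℝ) • (Pi.single i 1 : Fin p → ℝ) = b := by simp
    have := HasFDerivAt.comp_hasDerivAt 0 (h0 ▸ (hl b).hasFDerivAt) hc
    rw [h0] at this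
    exact this
  have hloc : IsLocalMax (fun t : ℝ => l (b + t • (Pi.single i 1 : Fin p → ℝ))) 0 := by
    apply Filter.Eventually.of_forall
    intro t
    have hsupp : suppF (b + t • (Pi.single i 1 : Fin p → ℝ)) ⊆ L := by
      intro j hj
      rw [mem_suppF] at hj
      by_cases h : j = i
      · exact h ▸ hi
      · apply hb
        rw [mem_suppF]
        simpa [Pi.single_apply, h] using hj
    simp only
    calc l (b + t • (Pi.single i 1 : Fin p → ℝ)) ≤ l b := hmax _ hsupp
      _ = l (b + (0:ℝ) • (Pi.single i 1 : Fin p → ℝ)) := by simp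
  exact hloc.hasDerivAt_eq_zero hφ

/-- RSC/RSM implies weak submodularity. -/
theorem rsc_implies_weak_submodularity
    (p : ℕ) (l : (Fin p → ℝ) → ℝ) (hl : Differentiable ℝ l)
    (β : Finset (Fin p) → (Fin p → ℝ))
    (hβsupp : ∀ S : Finset (Fin p), suppF (β S) ⊆ S)
    (hβmax : ∀ S : Finset (Fin p), ∀ v : Fin p → ℝ, suppF v ⊆ S → l v ≤ l (β S))
    (f : Finset (Fin p) → ℝ) (hf : ∀ S, f S = l (β S) - l 0)
    (U : Finset (Fin p)) (k : ℕ) (hk : 1 ≤ k)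
    (m M : ℝ) (hm : 0 < m) (hmM : m ≤ M)
    (hconc : RStrongConcaveOn l m (Omega (U.card + k)))
    (hsmooth : RSmoothOn l M (OmegaT (U.card + 1))) :
    ∀ L S : Finset (Fin p), L ⊆ U → Disjoint L S → S.card ≤ k →
      (m / M) * (f (L ∪ S) - f L) ≤ ∑ j ∈ S, (f (L ∪ {j}) - f L) := by
  intro L S hLU hdisj hSk
  have hMpos : 0 < M := lt_of_lt_of_le hm hmM
  set b := β L with hbdef
  set g : Fin p → ℝ := fun i => fderiv ℝ l b (Pi.single i 1) with hgdef
  have hbsupp : suppF b ⊆ L := hβsupp L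
  have hgL : ∀ i ∈ L, g i = 0 := fun i hi => grad_eq_zero hl hbsupp (hβmax L) hi
  have hbS : ∀ i ∈ S, b i = 0 := by
    intro i hi
    by_contra h
    exact (Finset.disjoint_left.mp hdisj (hbsupp (mem_suppF.mpr h))) hi
  -- Claim A
  set c := β (L ∪ S) with hcdef
  have hcsupp : suppF c ⊆ L ∪ S := hβsupp (L ∪ S)
  have hcard : (L ∪ S).card ≤ U.card + k :=
    le_trans (Finset.card_union_le L S) (add_le_add (Finset.card_le_card hLU) hSk)
  have hmemA : (b, c) ∈ Omega (U.card + k) := by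
    refine ⟨?_, ?_, ?_⟩
    · exact le_trans (spar_le_of_suppF_subset hbsupp)
        (le_trans (Finset.card_le_card hLU) (Nat.le_add_right _ _))
    · exact le_trans (spar_le_of_suppF_subset hcsupp) hcard
    · refine le_trans (spar_le_of_suppF_subset ?_) hcard
      exact le_trans (suppF_sub_subset b c)
        (Finset.union_subset (hbsupp.trans Finset.subset_union_left) hcsupp)
  have hcon := hconc b c hmemA
  have hder : (fderiv ℝ l b) (c - b) = ∑ i ∈ S, c i * g i := by
    rw [fd_sum]
    rw [← Finset.sum_subset (Finset.subset_univ S)]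
    · exact Finset.sum_congr rfl fun i hi => by rw [Pi.sub_apply, hbS i hi, sub_zero]
    · intro i _ hiS
      rcases em (i ∈ L) with h | h
      · rw [show (fderiv ℝ l b) (Pi.single i 1) = 0 from hgL i h, mul_zero]
      · have hb0 : b i = 0 := by
          by_contra hb; exact h (hbsupp (mem_suppF.mpr hb))
        have hc0 : c i = 0 := by
          by_contra hc
          rcases Finset.mem_union.mp (hcsupp (mem_suppF.mpr hc)) with h' | h'
          · exact h h'
          · exact hiS h'
        simp [hb0, hc0]
  have hsumsq : ∑ i ∈ S, c i ^ 2 ≤ ∑ i, (c i - b i) ^ 2 := by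
    calc ∑ i ∈ S, c i ^ 2 = ∑ i ∈ S, (c i - b i) ^ 2 :=
          Finset.sum_congr rfl fun i hi => by rw [hbS i hi, sub_zero]
      _ ≤ ∑ i, (c i - b i) ^ 2 :=
          Finset.sum_le_sum_of_subset_of_nonneg (Finset.subset_univ S)
            (fun i _ _ => sq_nonneg _)
  have hterm : ∀ i ∈ S, c i * g i - (m / 2) * c i ^ 2 ≤ g i ^ 2 / (2 * m) := by
    intro i _
    rw [le_div_iff₀ (by positivity : (0:ℝ) < 2 * m)]
    nlinarith [sq_nonneg (g i - m * c i)]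
  have hA : f (L ∪ S) - f L ≤ (∑ i ∈ S, g i ^ 2) / (2 * m) := by
    rw [hder] at hcon
    have h2 := mul_le_mul_of_nonpos_left hsumsq (by linarith : -(m / 2) ≤ 0)
    have h3 : ∑ i ∈ S, (c i * g i - (m / 2) * c i ^ 2)
        = (∑ i ∈ S, c i * g i) - (m / 2) * ∑ i ∈ S, c i ^ 2 := by
      rw [Finset.sum_sub_distrib, Finset.mul_sum]
    have h4 : ∑ i ∈ S, (c i * g i - (m / 2) * c i ^ 2) ≤ ∑ i ∈ S, g i ^ 2 / (2 * m) :=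
      Finset.sum_le_sum hterm
    have h5 : ∑ i ∈ S, g i ^ 2 / (2 * m) = (∑ i ∈ S, g i ^ 2) / (2 * m) :=
      (Finset.sum_div _ _ _).symm
    have h6 : f (L ∪ S) - f L = l c - l b := by rw [hf, hf]; ring
    linarith
  -- Claim B
  have hB : ∀ j ∈ S, g j ^ 2 / (2 * M) ≤ f (L ∪ {j}) - f L := by
    intro j hj
    set t := g j / M with htdef
    set y := b + t • (Pi.single j 1 : Fin p → ℝ) with hydef
    have hysupp : suppF y ⊆ L ∪ {j} := by
      intro i hi
      rw [mem_suppF] at hi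
      by_cases h : i = j
      · exact Finset.mem_union_right _ (by simp [h])
      · apply Finset.mem_union_left
        apply hbsupp
        rw [mem_suppF]
        simpa [hydef, Pi.single_apply, h] using hi
    have hmemB : (b, y) ∈ OmegaT (U.card + 1) := by
      refine ⟨le_trans (spar_le_of_suppF_subset hbsupp)
        (le_trans (Finset.card_le_card hLU) (Nat.le_add_right _ _)), ?_, ?_⟩
      · refine le_trans (spar_le_of_suppF_subset hysupp) ?_
        calc (L ∪ {j}).card ≤ L.card + 1 := by
              simpa using Finset.card_union_le L {j}
          _ ≤ U.card + 1 := Nat.add_le_add_right (Finset.card_le_card hLU) 1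
      · have hsub : suppF (b - y) ⊆ {j} := by
          intro i hi
          rw [mem_suppF] at hi
          by_contra h
          rw [Finset.mem_singleton] at h
          apply hi
          simp [hydef, Pi.single_apply, h]
        exact le_trans (spar_le_of_suppF_subset hsub) (by simp)
    have hsm := hsmooth b y hmemB
    have hder2 : (fderiv ℝ l b) (y - b) = t * g j := by
      have hy : y - b = t • (Pi.single j 1 : Fin p → ℝ) := by
        rw [hydef]; abel
      rw [hy, map_smul, smul_eq_mul]
    have hsq : ∑ i, (y i - b i) ^ 2 = t ^ 2 := by
      have h1 : ∀ i, (y i - b i) ^ 2 = if i = j then t ^ 2 else 0 := by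
        intro i
        by_cases h : i = j <;> simp [hydef, Pi.single_apply, h]
      rw [Finset.sum_congr rfl fun i _ => h1 i]
      simp [Finset.sum_ite_eq']
    have h6 : l y - l b ≤ f (L ∪ {j}) - f L := by
      rw [hf, hf]
      have := hβmax (L ∪ {j}) y hysupp
      linarith
    rw [hder2, hsq] at hsm
    have ht : t * g j - (M / 2) * t ^ 2 = g j ^ 2 / (2 * M) := by
      rw [htdef]
      field_simp
      ring
    linarith
  calc (m / M) * (f (L ∪ S) - f L) ≤ (m / M) * ((∑ i ∈ S, g i ^ 2) / (2 * m)) :=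
        mul_le_mul_of_nonneg_left hA (by positivity)
    _ = (∑ i ∈ S, g i ^ 2) / (2 * M) := by
        field_simp
    _ = ∑ j ∈ S, g j ^ 2 / (2 * M) := Finset.sum_div _ _ _
    _ ≤ ∑ j ∈ S, (f (L ∪ {j}) - f L) := Finset.sum_le_sum hB
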